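/- If a topological space X contains a nontrivial finite open set U (i.e., U is finite, nonempty, and U ≠ X), then there is no hypermixing map on X. -/
import Mathlib


theorem stmt0 {X : Type*} [TopologicalSpace X] (U : Set X)
    (hUopen : IsOpen U) (hUfin : U.Finite) (hUne : U.Nonempty) (hUne' : U ≠ Set.univ) :
    ¬ ∃ f : X → X, ∀ V : Set X, IsOpen V → V.Nonempty →
      (⋃ i : ℕ, ⋂ n ≥ i, f^[n] '' V) = Set.univ := by
  rintro ⟨f, hf⟩
  have hU := hf U hUopen hUne
  set A : ℕ → Set X := fun i => ⋂ n ≥ i, f^[n] '' U with hA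
  -- A is monotone
  have hmono : Monotone A := by
    intro i j hij
    exact Set.biInter_mono (fun n hn => le_trans hij hn) (fun n _ => le_refl _)
  have hsub : ∀ i, A i ⊆ f^[i] '' U := fun i =>
    Set.biInter_subset_of_mem (le_refl i)
  have hAfin : ∀ i, (A i).Finite := fun i => (hUfin.image _).subset (hsub i)
  have hcard : ∀ i, (A i).ncard ≤ U.ncard := fun i =>
    le_trans (Set.ncard_le_ncard (hsub i) (hUfin.image _)) (Set.ncard_image_le hUfin)
  -- get point outside U
  obtain ⟨x, hx⟩ : ∃ x, x ∉ U := by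
    by_contra h
    push_neg at h
    exact hUne' (Set.eq_univ_of_forall h)
  -- every point is in some A i
  have hmem : ∀ y : X, ∃ i, y ∈ A i := by
    intro y
    have : y ∈ ⋃ i : ℕ, A i := hU ▸ Set.mem_univ y
    exact Set.mem_iUnion.mp this
  classical
  choose g hg using hmem
  -- insert x U is finite, take max index
  have hfin : (insert x U).Finite := hUfin.insert x
  obtain ⟨N, hN⟩ := (hfin.image g).bddAbove
  have hsubA : insert x U ⊆ A N := by
    intro y hy
    exact hmono (hN (Set.mem_image_of_mem g hy)) (hg y)
  have h1 : (insert x U).ncard ≤ U.ncard := le_trans (Set.ncard_le_ncard hsubA (hAfin N)) (hcard N)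
  rw [Set.ncard_insert_of_notMem hx hUfin] at h1
  omega
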